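/- arXiv:1806.07943 — 9 statements merged into one kernel-verified Lean document; each statement's English description precedes it below -/
import Mathlib

section
/- If X is a Banach space with a Schauder basis (xₙ), then the map T : L_X → X sending (aₙ) to ∑ₙ aₙxₙ is an isomorphism of normed spaces, where L_X carries the norm η((aₙ)) = supₙ ‖∑_{i=1}^n aᵢxᵢ‖. That is, every Schauder basis of a Banach space is an essential Schauder basis. -/
open Filter Topology

variable (𝕜 : Type*) [RCLike 𝕜]
variable {X : Type*} [NormedAddCommGroup X] [NormedSpace 𝕜 X]

/-- The `n`-th partial sum `∑_{i<n} aᵢ • xᵢ` of the expansion with coefficients `a`. -/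
noncomputable def partialSum (x : ℕ → X) (a : ℕ → 𝕜) (n : ℕ) : X :=
  ∑ i ∈ Finset.range n, a i • x i

/-- `v` has the expansion `v = ∑ᵢ aᵢ xᵢ` (ordered convergence of partial sums). -/
def Expands (x : ℕ → X) (a : ℕ → 𝕜) (v : X) : Prop :=
  Filter.Tendsto (partialSum 𝕜 x a) Filter.atTop (nhds v)

/-- `(xₙ)` is a Schauder basis of `X`: every vector has a unique expansion. -/
def IsSchauderBasis (x : ℕ → X) : Prop :=
  ∀ v : X, ∃! a : ℕ → 𝕜, Expands 𝕜 x a v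

/-- `(xₙ)` is an essential Schauder basis of `X`: a Schauder basis for which the canonical
map `T : L_X → X` is an isomorphism; equivalently (since `‖T‖ ≤ 1` always holds), there is
`C > 0` bounding `η(a) = supₙ ‖∑_{i<n} aᵢxᵢ‖ ≤ C‖v‖` for every expansion `v = ∑ aᵢxᵢ`,
i.e. `‖T⁻¹‖ ≤ C`. -/
def IsEssentialBasis (x : ℕ → X) : Prop :=
  IsSchauderBasis 𝕜 x ∧
    ∃ C > 0, ∀ (a : ℕ → 𝕜) (v : X), Expands 𝕜 x a v →
      ∀ n, ‖partialSum 𝕜 x a n‖ ≤ C * ‖v‖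

/-- `(xₙ)` is an essential basic sequence: an essential Schauder basis of the closure of
its linear span. -/
def IsEssentialBasicSeq (x : ℕ → X) : Prop :=
  (∀ v ∈ closure (Submodule.span 𝕜 (Set.range x) : Set X),
      ∃! a : ℕ → 𝕜, Expands 𝕜 x a v) ∧
    ∃ C > 0, ∀ (a : ℕ → 𝕜) (v : X), Expands 𝕜 x a v →
      ∀ n, ‖partialSum 𝕜 x a n‖ ≤ C * ‖v‖

/-- The Grunblum condition with constant `M`. -/
def Grunblum (x : ℕ → X) (M : ℝ) : Prop :=
  ∀ (a : ℕ → 𝕜) (m n : ℕ), m ≤ n →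
    ‖partialSum 𝕜 x a m‖ ≤ M * ‖partialSum 𝕜 x a n‖

section aux

/-- The submodule of `ℕ →ᵇ X` corresponding to `L_X`: sequences of partial sums. -/
def Msub (x : ℕ → X) : Submodule 𝕜 (BoundedContinuousFunction ℕ X) where
  carrier := {s | s 0 = 0 ∧ (∀ n, s (n + 1) - s n ∈ (𝕜 ∙ x n : Submodule 𝕜 X)) ∧
      ∃ v, Tendsto (⇑s) atTop (𝓝 v)}
  zero_mem' := ⟨rfl, fun n => by simp, ⟨0, tendsto_const_nhds⟩⟩
  add_mem' := by
    rintro s t ⟨hs0, hsc, vs, hsv⟩ ⟨ht0, htc, vt, htv⟩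
    refine ⟨by simp [hs0, ht0], fun n => ?_, ⟨vs + vt, ?_⟩⟩
    · have : (s + t) (n + 1) - (s + t) n = (s (n+1) - s n) + (t (n+1) - t n) := by
        simp; abel
      rw [this]; exact Submodule.add_mem _ (hsc n) (htc n)
    · have : ⇑(s + t) = fun n => s n + t n := by ext n; simp
      rw [this]; exact hsv.add htv
  smul_mem' := by
    rintro c s ⟨hs0, hsc, vs, hsv⟩
    refine ⟨by simp [hs0], fun n => ?_, ⟨c • vs, ?_⟩⟩
    · have : (c • s) (n + 1) - (c • s) n = c • (s (n+1) - s n) := by simp [smul_sub]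
      rw [this]; exact Submodule.smul_mem _ _ (hsc n)
    · have : ⇑(c • s) = fun n => c • s n := by ext n; simp
      rw [this]; exact hsv.const_smul c

lemma Msub_isClosed (x : ℕ → X) [CompleteSpace X] :
    IsClosed ((Msub 𝕜 x : Set (BoundedContinuousFunction ℕ X))) := by
  have h1 : IsClosed {s : BoundedContinuousFunction ℕ X | s 0 = 0} :=
    isClosed_singleton.preimage (continuous_eval_const 0)
  have h2 : IsClosed {s : BoundedContinuousFunction ℕ X |
      ∀ n, s (n + 1) - s n ∈ (𝕜 ∙ x n : Submodule 𝕜 X)} := by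
    have : {s : BoundedContinuousFunction ℕ X |
        ∀ n, s (n + 1) - s n ∈ (𝕜 ∙ x n : Submodule 𝕜 X)} =
        ⋂ n, (fun s : BoundedContinuousFunction ℕ X => s (n + 1) - s n) ⁻¹'
          ((𝕜 ∙ x n : Submodule 𝕜 X) : Set X) := by
      ext s; simp [Set.mem_iInter]
    rw [this]
    exact isClosed_iInter fun n =>
      ((𝕜 ∙ x n : Submodule 𝕜 X).closed_of_finiteDimensional).preimage
        ((continuous_eval_const (n + 1)).sub
          (continuous_eval_const n))
  have h3 : IsClosed {s : BoundedContinuousFunction ℕ X | ∃ v, Tendsto (⇑s) atTop (𝓝 v)} := by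
    refine isClosed_of_closure_subset ?_
    intro s hs
    have hc : CauchySeq (⇑s) := by
      rw [Metric.cauchySeq_iff]
      intro ε hε
      obtain ⟨t, ⟨v, hv⟩, hst⟩ := Metric.mem_closure_iff.mp hs (ε / 3) (by positivity)
      obtain ⟨N, hN⟩ := Metric.cauchySeq_iff.mp hv.cauchySeq (ε / 3) (by positivity)
      refine ⟨N, fun m hm n hn => ?_⟩
      have h1' := BoundedContinuousFunction.dist_coe_le_dist (f := s) (g := t) m
      have h2' := BoundedContinuousFunction.dist_coe_le_dist (f := s) (g := t) n
      calc dist (s m) (s n) ≤ dist (s m) (t m) + dist (t m) (t n) + dist (t n) (s n) :=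
            dist_triangle4 _ _ _ _
        _ < ε / 3 + ε / 3 + ε / 3 := by
            have := hN m hm n hn
            have h2'' : dist (t n) (s n) ≤ dist s t := by rw [dist_comm]; exact h2'
            linarith
        _ = ε := by ring
    exact cauchySeq_tendsto_of_complete hc
  have : ((Msub 𝕜 x : Set (BoundedContinuousFunction ℕ X))) =
      {s : BoundedContinuousFunction ℕ X | s 0 = 0} ∩
        ({s : BoundedContinuousFunction ℕ X | ∀ n, s (n + 1) - s n ∈ (𝕜 ∙ x n : Submodule 𝕜 X)} ∩
        {s : BoundedContinuousFunction ℕ X | ∃ v, Tendsto (⇑s) atTop (𝓝 v)}) := by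
    ext s
    simp only [Set.mem_inter_iff, Set.mem_setOf_eq]
    exact ⟨fun ⟨a, b, c⟩ => ⟨a, b, c⟩, fun ⟨a, b, c⟩ => ⟨a, b, c⟩⟩
  rw [this]
  exact h1.inter (h2.inter h3)

lemma tendsto_lim (x : ℕ → X) (s : Msub 𝕜 x) :
    Tendsto (⇑(s : BoundedContinuousFunction ℕ X)) atTop
      (𝓝 (limUnder atTop (⇑(s : BoundedContinuousFunction ℕ X)))) := by
  obtain ⟨-, -, v, hv⟩ := s.2
  rwa [hv.limUnder_eq]

/-- The canonical map `T : L_X → X`. -/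
noncomputable def Tmap (x : ℕ → X) : Msub 𝕜 x →L[𝕜] X :=
  LinearMap.mkContinuous
    { toFun := fun s => limUnder atTop (⇑(s : BoundedContinuousFunction ℕ X))
      map_add' := fun s t => by
        have h := (tendsto_lim 𝕜 x s).add (tendsto_lim 𝕜 x t)
        have he : ⇑((↑(s + t) : BoundedContinuousFunction ℕ X)) = fun n =>
            (s : BoundedContinuousFunction ℕ X) n + (t : BoundedContinuousFunction ℕ X) n := by
          ext n; simp
        rw [← he] at h
        exact h.limUnder_eq
      map_smul' := fun c s => by
        have h := (tendsto_lim 𝕜 x s).const_smul c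
        have he : ⇑((↑(c • s) : BoundedContinuousFunction ℕ X)) = fun n =>
            c • (s : BoundedContinuousFunction ℕ X) n := by
          ext n; simp
        rw [← he] at h
        exact h.limUnder_eq }
    1
    (fun s => by
      rw [one_mul]
      refine le_of_tendsto (tendsto_lim 𝕜 x s).norm (Eventually.of_forall fun n => ?_)
      exact BoundedContinuousFunction.norm_coe_le_norm _ n)

/-- Pack an expansion into an element of the submodule. -/
noncomputable def mkM (x : ℕ → X) (a : ℕ → 𝕜) (v : X) (h : Expands 𝕜 x a v) : Msub 𝕜 x :=
  ⟨BoundedContinuousFunction.ofNormedAddCommGroup (partialSum 𝕜 x a)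
      continuous_of_discreteTopology
      (⨆ n, ‖partialSum 𝕜 x a n‖)
      (fun n => le_ciSup h.norm.bddAbove_range n),
    by
      refine ⟨?_, fun n => ?_, ⟨v, h⟩⟩
      · show partialSum 𝕜 x a 0 = 0
        simp [partialSum]
      · show partialSum 𝕜 x a (n + 1) - partialSum 𝕜 x a n ∈ (𝕜 ∙ x n : Submodule 𝕜 X)
        rw [Submodule.mem_span_singleton]
        exact ⟨a n, by simp [partialSum, Finset.sum_range_succ]⟩⟩

lemma Tmap_mkM (x : ℕ → X) (a : ℕ → 𝕜) (v : X) (h : Expands 𝕜 x a v) :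
    Tmap 𝕜 x (mkM 𝕜 x a v h) = v :=
  Tendsto.limUnder_eq h

end aux

/-- in a Banach space, every Schauder basis is essential: the canonical map
`T : L_X → X` is an isomorphism (it is onto by the basis property, and `‖v‖ ≤ η(a) ≤ C‖v‖`). -/
theorem stmt1 [CompleteSpace X] (x : ℕ → X) (hx : IsSchauderBasis 𝕜 x) :
    ∃ C > 0, ∀ (a : ℕ → 𝕜) (v : X), Expands 𝕜 x a v →
      ‖v‖ ≤ (⨆ n, ‖partialSum 𝕜 x a n‖) ∧
      (⨆ n, ‖partialSum 𝕜 x a n‖) ≤ C * ‖v‖ := by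
  haveI : CompleteSpace (Msub 𝕜 x) := (Msub_isClosed 𝕜 x).completeSpace_coe
  have hzero : Expands 𝕜 x (0 : ℕ → 𝕜) 0 := by
    have : partialSum 𝕜 x (0 : ℕ → 𝕜) = fun _ => 0 := by
      ext n; simp [partialSum]
    unfold Expands; rw [this]; exact tendsto_const_nhds
  -- injectivity
  have hker : LinearMap.ker (Tmap 𝕜 x : Msub 𝕜 x →ₗ[𝕜] X) = ⊥ := by
    rw [LinearMap.ker_eq_bot']
    intro s hs0
    obtain ⟨h0, hc, v, hv⟩ := s.2
    have hveq : v = 0 := by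
      have := hv.limUnder_eq
      rw [show limUnder atTop (⇑(s : BoundedContinuousFunction ℕ X)) = Tmap 𝕜 x s from rfl,
        (show Tmap 𝕜 x s = 0 from hs0)] at this
      exact this.symm
    choose c hcs using fun n => Submodule.mem_span_singleton.mp (hc n)
    have hps : ∀ n, partialSum 𝕜 x c n = (s : BoundedContinuousFunction ℕ X) n := by
      intro n
      calc partialSum 𝕜 x c n
          = ∑ i ∈ Finset.range n, ((s : BoundedContinuousFunction ℕ X) (i + 1) -
              (s : BoundedContinuousFunction ℕ X) i) :=
            Finset.sum_congr rfl (fun i _ => (hcs i))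
        _ = (s : BoundedContinuousFunction ℕ X) n - (s : BoundedContinuousFunction ℕ X) 0 :=
            Finset.sum_range_sub _ n
        _ = _ := by rw [h0, sub_zero]
    have hcExp : Expands 𝕜 x c 0 := by
      unfold Expands
      have : partialSum 𝕜 x c = ⇑(s : BoundedContinuousFunction ℕ X) := funext hps
      rw [this, ← hveq]; exact hv
    obtain ⟨b, -, hub⟩ := hx 0
    have hc0 : c = 0 := (hub c hcExp).trans (hub (0 : ℕ → 𝕜) hzero).symm
    have : ∀ n, (s : BoundedContinuousFunction ℕ X) n = 0 := by
      intro n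
      rw [← hps n, hc0]
      simp [partialSum]
    exact Subtype.ext (BoundedContinuousFunction.ext this)
  -- surjectivity
  have hrange : LinearMap.range (Tmap 𝕜 x : Msub 𝕜 x →ₗ[𝕜] X) = ⊤ := by
    rw [LinearMap.range_eq_top]
    intro v
    obtain ⟨a, ha, -⟩ := hx v
    exact ⟨mkM 𝕜 x a v ha, Tmap_mkM 𝕜 x a v ha⟩
  set e := ContinuousLinearEquiv.ofBijective (Tmap 𝕜 x) hker hrange with he
  refine ⟨‖(e.symm : X →L[𝕜] Msub 𝕜 x)‖ + 1, by positivity, ?_⟩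
  intro a v hav
  set s : Msub 𝕜 x := mkM 𝕜 x a v hav with hsdef
  have hbdd : BddAbove (Set.range fun n => ‖partialSum 𝕜 x a n‖) := hav.norm.bddAbove_range
  constructor
  · exact le_of_tendsto hav.norm (Eventually.of_forall fun n => le_ciSup hbdd n)
  · have hes : e s = v := Tmap_mkM 𝕜 x a v hav
    have hsymm : e.symm v = s := by rw [← hes]; exact e.symm_apply_apply s
    have h1 : (⨆ n, ‖partialSum 𝕜 x a n‖) ≤ ‖s‖ := by
      refine ciSup_le fun n => ?_
      exact BoundedContinuousFunction.norm_coe_le_norm (s : BoundedContinuousFunction ℕ X) n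
    have h2 : ‖s‖ ≤ ‖(e.symm : X →L[𝕜] Msub 𝕜 x)‖ * ‖v‖ := by
      rw [← hsymm]
      exact (e.symm : X →L[𝕜] Msub 𝕜 x).le_opNorm v
    have h3 : ‖(e.symm : X →L[𝕜] Msub 𝕜 x)‖ * ‖v‖ ≤ (‖(e.symm : X →L[𝕜] Msub 𝕜 x)‖ + 1) * ‖v‖ :=
      mul_le_mul_of_nonneg_right (by linarith) (norm_nonneg v)
    linarith
end

section
/- Let X be a normed space with an essential Schauder basis (xₙ) and let (Pₙ) be the canonical partial-sum projections. Then supₙ ‖Pₙ‖ < ∞; in fact supₙ ‖Pₙ‖ ≤ ‖T⁻¹‖, where T : L_X → X is the canonical isomorphism. -/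
open Filter Topology

variable (𝕜 : Type*) [RCLike 𝕜]
variable {X : Type*} [NormedAddCommGroup X] [NormedSpace 𝕜 X]

/-- `supₙ ‖Pₙ‖ ≤ ‖T⁻¹‖ < ∞`: for any bound `C` on `‖T⁻¹‖`,
each `‖Pₙ‖ ≤ C`, hence the supremum of the norms is at most `C`. -/
theorem stmt4 (x : ℕ → X) (hx : IsSchauderBasis 𝕜 x) (C : ℝ)
    (hC : ∀ (a : ℕ → 𝕜) (v : X), Expands 𝕜 x a v →
      ∀ n, ‖partialSum 𝕜 x a n‖ ≤ C * ‖v‖)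
    (P : ℕ → X →L[𝕜] X)
    (hP : ∀ (n : ℕ) (a : ℕ → 𝕜) (v : X), Expands 𝕜 x a v → P n v = partialSum 𝕜 x a n) :
    (∀ n, ‖P n‖ ≤ C) ∧ (⨆ n, ‖P n‖) ≤ C := by
  -- First, `X` is nontrivial: some `x i ≠ 0`, by uniqueness of the expansion of `0`.
  have hex : ∃ i, x i ≠ 0 := by
    by_contra h
    push_neg at h
    obtain ⟨a₀, -, huniq⟩ := hx 0
    have hexp : ∀ a : ℕ → 𝕜, Expands 𝕜 x a 0 := by
      intro a
      have : partialSum 𝕜 x a = fun _ => (0 : X) := by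
        funext n
        simp [partialSum, h]
      unfold Expands
      rw [this]
      exact tendsto_const_nhds
    have h1 := huniq (fun _ => 1) (hexp _)
    have h0 := huniq (fun _ => 0) (hexp _)
    have : (1 : 𝕜) = 0 := by
      have := congrFun (h1.trans h0.symm) 0
      simpa using this
    exact one_ne_zero this
  obtain ⟨i, hi⟩ := hex
  -- `C ≥ 0`
  have hC0 : 0 ≤ C := by
    obtain ⟨a, ha, -⟩ := hx (x i)
    have := hC a (x i) ha 0
    have h0 : (0 : ℝ) ≤ C * ‖x i‖ := le_trans (norm_nonneg _) this
    have hxi : 0 < ‖x i‖ := norm_pos_iff.mpr hi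
    nlinarith
  have key : ∀ n, ‖P n‖ ≤ C := by
    intro n
    apply ContinuousLinearMap.opNorm_le_bound _ hC0
    intro v
    obtain ⟨a, ha, -⟩ := hx v
    rw [hP n a v ha]
    exact hC a v ha n
  exact ⟨key, Real.iSup_le key hC0⟩
end

section
/- (Banach–Grunblum criterion for normed spaces, sufficiency) Let X be a normed space and (xₙ) a sequence of nonzero vectors such that there exists M ≥ 1 with ‖∑_{i=1}^m aᵢxᵢ‖ ≤ M‖∑_{i=1}^n aᵢxᵢ‖ for all scalars (aᵢ) and all m ≤ n. Then (xₙ) is an essential basic sequence: it is an essential Schauder basis of the closure of its linear span. -/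
open Filter Topology

variable (𝕜 : Type*) [RCLike 𝕜]
variable {X : Type*} [NormedAddCommGroup X] [NormedSpace 𝕜 X]

lemma partialSum_sub (x : ℕ → X) (a b : ℕ → 𝕜) (n : ℕ) :
    partialSum 𝕜 x (a - b) n = partialSum 𝕜 x a n - partialSum 𝕜 x b n := by
  simp [partialSum, sub_smul, Finset.sum_sub_distrib]

lemma partialSum_stable (x : ℕ → X) (a : ℕ → 𝕜) {N n : ℕ}
    (h : ∀ i, N ≤ i → a i = 0) (hn : N ≤ n) :
    partialSum 𝕜 x a n = partialSum 𝕜 x a N := by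
  refine (Finset.sum_subset (Finset.range_subset_range.2 hn) ?_).symm
  intro i hi hni
  simp only [Finset.mem_range, not_lt] at hni
  rw [h i hni, zero_smul]

lemma lemA {x : ℕ → X} {M : ℝ} (hG : Grunblum 𝕜 x M) {a : ℕ → 𝕜} {v : X}
    (h : Expands 𝕜 x a v) (n : ℕ) : ‖partialSum 𝕜 x a n‖ ≤ M * ‖v‖ := by
  have h' : Tendsto (fun k => M * ‖partialSum 𝕜 x a k‖) atTop (nhds (M * ‖v‖)) :=
    (h.norm).const_mul M
  exact ge_of_tendsto h' (eventually_atTop.2 ⟨n, fun k hk => hG a n k hk⟩)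

lemma lemB {x : ℕ → X} {M : ℝ} (hG : Grunblum 𝕜 x M) (hne : ∀ n, x n ≠ 0)
    {a : ℕ → 𝕜} (h : Expands 𝕜 x a 0) : a = 0 := by
  have hz : ∀ n, partialSum 𝕜 x a n = 0 := by
    intro n
    have := lemA 𝕜 hG h n
    simpa using this
  funext n
  have : a n • x n = 0 := by
    have h1 := hz (n + 1)
    have h2 := hz n
    have h3 : partialSum 𝕜 x a (n+1) - partialSum 𝕜 x a n = a n • x n := by
      simp [partialSum, Finset.sum_range_succ]
    rw [h1, h2, sub_zero] at h3
    exact h3.symm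
  rcases smul_eq_zero.1 this with h | h
  · exact h
  · exact absurd h (hne n)

/-- Banach–Grunblum, sufficiency: the Grunblum condition with constant
`M ≥ 1` on a sequence of nonzero vectors implies that it is an essential basic sequence. -/
theorem stmt7 (x : ℕ → X) (hne : ∀ n, x n ≠ 0)
    (M : ℝ) (hM : 1 ≤ M) (hG : Grunblum 𝕜 x M) :
    IsEssentialBasicSeq 𝕜 x := by
  have hM0 : (0:ℝ) < M := lt_of_lt_of_le one_pos hM
  constructor
  · intro v hv
    obtain ⟨w, hwmem, hwt⟩ := mem_closure_iff_seq_limit.1 hv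
    have H : ∀ k, ∃ (b : ℕ → 𝕜) (N : ℕ), (∀ i, N ≤ i → b i = 0) ∧ partialSum 𝕜 x b N = w k := by
      intro k
      obtain ⟨c, hc⟩ := Finsupp.mem_span_range_iff_exists_finsupp.1 (hwmem k)
      refine ⟨c, c.support.sup id + 1, ?_, ?_⟩
      · intro i hi
        by_contra h
        have h1 : i ∈ c.support := Finsupp.mem_support_iff.2 h
        have h2 := Finset.le_sup (f := id) h1
        simp only [id] at h2
        omega
      · rw [← hc, Finsupp.sum]
        refine (Finset.sum_subset ?_ ?_).symm
        · intro i hi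
          have h2 := Finset.le_sup (f := id) hi
          simp only [id] at h2
          exact Finset.mem_range.2 (by omega)
        · intro i _ hni
          rw [Finsupp.notMem_support_iff.1 hni, zero_smul]
    choose b N hb0 hbN using H
    have hstab : ∀ k n, N k ≤ n → partialSum 𝕜 x (b k) n = w k := fun k n hn => by
      rw [partialSum_stable 𝕜 x (b k) (hb0 k) hn, hbN k]
    have hExp : ∀ k, Expands 𝕜 x (b k) (w k) := by
      intro k
      refine Tendsto.congr' ?_ tendsto_const_nhds
      exact eventually_atTop.2 ⟨N k, fun n hn => (hstab k n hn).symm⟩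
    have hbd : ∀ j k n, ‖partialSum 𝕜 x (b j - b k) n‖ ≤ M * ‖w j - w k‖ := by
      intro j k n
      refine lemA 𝕜 hG ?_ n
      have h := (hExp j).sub (hExp k)
      exact Tendsto.congr (fun n => (partialSum_sub 𝕜 x (b j) (b k) n).symm) h
    have hxpos : ∀ n, (0:ℝ) < ‖x n‖ := fun n => norm_pos_iff.2 (hne n)
    have hcb : ∀ n j k, ‖b j n - b k n‖ * ‖x n‖ ≤ 2 * M * ‖w j - w k‖ := by
      intro n j k
      have e1 : (b j n - b k n) • x n
          = partialSum 𝕜 x (b j - b k) (n+1) - partialSum 𝕜 x (b j - b k) n := by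
        simp [partialSum, Finset.sum_range_succ]
      calc ‖b j n - b k n‖ * ‖x n‖ = ‖(b j n - b k n) • x n‖ := (norm_smul _ _).symm
        _ = ‖partialSum 𝕜 x (b j - b k) (n+1) - partialSum 𝕜 x (b j - b k) n‖ := by rw [e1]
        _ ≤ ‖partialSum 𝕜 x (b j - b k) (n+1)‖ + ‖partialSum 𝕜 x (b j - b k) n‖ := norm_sub_le _ _
        _ ≤ M * ‖w j - w k‖ + M * ‖w j - w k‖ := add_le_add (hbd j k _) (hbd j k _)
        _ = 2 * M * ‖w j - w k‖ := by ring
    have cau : ∀ n, CauchySeq (fun k => b k n) := by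
      intro n
      rw [Metric.cauchySeq_iff]
      intro ε hε
      have hwc : CauchySeq w := hwt.cauchySeq
      have hx := hxpos n
      have hδ : 0 < ε * ‖x n‖ / (2 * M) := by positivity
      obtain ⟨K, hK⟩ := Metric.cauchySeq_iff.1 hwc _ hδ
      refine ⟨K, fun j hj k hk => ?_⟩
      have h1 := hcb n j k
      have h2 : ‖w j - w k‖ < ε * ‖x n‖ / (2 * M) := by
        rw [← dist_eq_norm]; exact hK j hj k hk
      rw [dist_eq_norm]
      have h3 : 2 * M * ‖w j - w k‖ < 2 * M * (ε * ‖x n‖ / (2 * M)) :=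
        mul_lt_mul_of_pos_left h2 (by positivity)
      have h4 : 2 * M * (ε * ‖x n‖ / (2 * M)) = ε * ‖x n‖ := by
        field_simp
      nlinarith [norm_nonneg (b j n - b k n)]
    set a : ℕ → 𝕜 := fun n => limUnder atTop (fun k => b k n) with ha
    have hlim : ∀ n, Tendsto (fun k => b k n) atTop (nhds (a n)) :=
      fun n => (cau n).tendsto_limUnder
    have hPS : ∀ m, Tendsto (fun k => partialSum 𝕜 x (b k) m) atTop
        (nhds (partialSum 𝕜 x a m)) := by
      intro m
      simp only [partialSum]
      exact tendsto_finset_sum _ fun i _ => (hlim i).smul_const (x i)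
    have hkey : ∀ k m, ‖partialSum 𝕜 x a m - partialSum 𝕜 x (b k) m‖ ≤ M * ‖v - w k‖ := by
      intro k m
      have t1 : Tendsto (fun j => ‖partialSum 𝕜 x (b j) m - partialSum 𝕜 x (b k) m‖)
          atTop (nhds ‖partialSum 𝕜 x a m - partialSum 𝕜 x (b k) m‖) :=
        ((hPS m).sub tendsto_const_nhds).norm
      have t2 : Tendsto (fun j => M * ‖w j - w k‖) atTop (nhds (M * ‖v - w k‖)) :=
        ((hwt.sub tendsto_const_nhds).norm).const_mul M
      refine le_of_tendsto_of_tendsto' t1 t2 fun j => ?_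
      rw [← partialSum_sub]
      exact hbd j k m
    have hexp : Expands 𝕜 x a v := by
      rw [Expands, Metric.tendsto_atTop]
      intro ε hε
      have hM1 : (0:ℝ) < M + 1 := by linarith
      obtain ⟨K, hK⟩ := Metric.tendsto_atTop.1 hwt (ε / (M + 1)) (by positivity)
      refine ⟨N K, fun m hm => ?_⟩
      have h1 : partialSum 𝕜 x (b K) m = w K := hstab K m hm
      have h2 := hkey K m
      rw [h1] at h2
      have h3 : dist (partialSum 𝕜 x a m) v ≤ ‖partialSum 𝕜 x a m - w K‖ + dist (w K) v :=
        dist_triangle _ _ _ |>.trans_eq' rfl |>.trans (by rw [dist_eq_norm])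
      have h4 : ‖v - w K‖ = dist (w K) v := by rw [dist_eq_norm, norm_sub_rev]
      have h5 : dist (w K) v < ε / (M + 1) := hK K le_rfl
      have h6 : dist (w K) v ≥ 0 := dist_nonneg
      rw [h4] at h2
      have h7 : (M + 1) * (ε / (M + 1)) = ε := by field_simp
      nlinarith
    refine ⟨a, hexp, ?_⟩
    intro a' ha'
    have h0 : Expands 𝕜 x (a' - a) 0 := by
      have h := ha'.sub hexp
      rw [sub_self] at h
      exact Tendsto.congr (fun n => (partialSum_sub 𝕜 x a' a n).symm) h
    have := lemB 𝕜 hG hne h0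
    funext n
    have hfn := congrFun this n
    simpa [sub_eq_zero] using hfn
  · exact ⟨M, hM0, fun a v h n => lemA 𝕜 hG h n⟩
end

section
/- Let X be a normed space, (xₙ) an essential basic sequence with coordinate functionals (xₙ*), and (yₙ) a sequence with ∑ₙ ‖xₙ − yₙ‖·‖xₙ*‖ = λ < 1. Then for every scalar sequence (aₙ) and every n, (1−λ)‖∑_{i=1}^n aᵢxᵢ‖ ≤ ‖∑_{i=1}^n aᵢyᵢ‖ ≤ (1+λ)‖∑_{i=1}^n aᵢxᵢ‖. -/
open Filter Topology

variable (𝕜 : Type*) [RCLike 𝕜]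
variable {X : Type*} [NormedAddCommGroup X] [NormedSpace 𝕜 X]

/-- with `λ = ∑ ‖xₙ-yₙ‖·‖xₙ*‖ < 1`, for every scalar sequence and every `n`,
`(1-λ)‖∑_{i≤n} aᵢxᵢ‖ ≤ ‖∑_{i≤n} aᵢyᵢ‖ ≤ (1+λ)‖∑_{i≤n} aᵢxᵢ‖`. -/
theorem stmt11 (x y : ℕ → X) (hx : IsEssentialBasicSeq 𝕜 x)
    (K : ℕ → ℝ)
    (hK : ∀ (n : ℕ) (a : ℕ → 𝕜) (v : X), Expands 𝕜 x a v → ‖a n‖ ≤ K n * ‖v‖)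
    (hsum : Summable fun n => ‖x n - y n‖ * K n)
    (hlam : (∑' n, ‖x n - y n‖ * K n) < 1) :
    ∀ (a : ℕ → 𝕜) (n : ℕ),
      (1 - ∑' m, ‖x m - y m‖ * K m) * ‖partialSum 𝕜 x a n‖ ≤ ‖partialSum 𝕜 y a n‖ ∧
      ‖partialSum 𝕜 y a n‖ ≤ (1 + ∑' m, ‖x m - y m‖ * K m) * ‖partialSum 𝕜 x a n‖ := by
  intro a n
  set lam := ∑' m, ‖x m - y m‖ * K m with hlamdef
  have hKpos : ∀ m, 0 < K m := by
    intro m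
    have hexp : Expands 𝕜 x (fun i => if i = m then (1:𝕜) else 0) (x m) := by
      apply tendsto_atTop_of_eventually_const (i₀ := m + 1)
      intro k hk
      unfold partialSum
      rw [Finset.sum_eq_single m]
      · simp
      · intro b _ hb; simp [hb]
      · intro h
        exact absurd (Finset.mem_range.2 (lt_of_lt_of_le (Nat.lt_succ_self m) hk)) h
    have h1 := hK m _ _ hexp
    simp only [if_pos, norm_one] at h1
    nlinarith [norm_nonneg (x m)]
  have hterm : ∀ m, 0 ≤ ‖x m - y m‖ * K m :=
    fun m => mul_nonneg (norm_nonneg _) (hKpos m).le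
  set v := partialSum 𝕜 x a n with hv
  have hcoef : ∀ i, i < n → ‖a i‖ ≤ K i * ‖v‖ := by
    intro i hi
    have hexp : Expands 𝕜 x (fun j => if j < n then a j else 0) v := by
      apply tendsto_atTop_of_eventually_const (i₀ := n)
      intro k hk
      rw [hv]
      unfold partialSum
      rw [← Finset.sum_subset (Finset.range_subset_range.2 hk) ?_]
      · exact Finset.sum_congr rfl fun j hj => by simp [Finset.mem_range.1 hj]
      · intro j _ hj'
        simp [show ¬ j < n from by simpa using hj']
    have h2 := hK i _ _ hexp
    simpa [if_pos hi] using h2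
  have hdiff : ‖partialSum 𝕜 y a n - v‖ ≤ lam * ‖v‖ := by
    have h1 : partialSum 𝕜 y a n - v = ∑ i ∈ Finset.range n, a i • (y i - x i) := by
      rw [hv]
      unfold partialSum
      rw [← Finset.sum_sub_distrib]
      exact Finset.sum_congr rfl fun i _ => (smul_sub _ _ _).symm
    rw [h1]
    calc ‖∑ i ∈ Finset.range n, a i • (y i - x i)‖
        ≤ ∑ i ∈ Finset.range n, ‖a i • (y i - x i)‖ := norm_sum_le _ _
      _ ≤ ∑ i ∈ Finset.range n, (‖x i - y i‖ * K i) * ‖v‖ := by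
          apply Finset.sum_le_sum
          intro i hi
          rw [norm_smul, norm_sub_rev]
          calc ‖a i‖ * ‖x i - y i‖
              ≤ (K i * ‖v‖) * ‖x i - y i‖ :=
                mul_le_mul_of_nonneg_right (hcoef i (Finset.mem_range.1 hi)) (norm_nonneg _)
            _ = (‖x i - y i‖ * K i) * ‖v‖ := by ring
      _ = (∑ i ∈ Finset.range n, ‖x i - y i‖ * K i) * ‖v‖ := (Finset.sum_mul _ _ _).symm
      _ ≤ lam * ‖v‖ :=
          mul_le_mul_of_nonneg_right (Summable.sum_le_tsum _ (fun i _ => hterm i) hsum) (norm_nonneg _)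
  have h3 : ‖partialSum 𝕜 y a n‖ - ‖v‖ ≤ ‖partialSum 𝕜 y a n - v‖ := norm_sub_norm_le _ _
  have h4 : ‖v‖ - ‖partialSum 𝕜 y a n‖ ≤ ‖partialSum 𝕜 y a n - v‖ := by
    rw [norm_sub_rev]; exact norm_sub_norm_le _ _
  constructor
  · rw [sub_mul, one_mul]; linarith
  · rw [add_mul, one_mul]; linarith
end

section
/- Let X be a normed space, (xₙ) an essential basic sequence with Grunblum constant M, and (yₙ) a sequence with ∑ₙ ‖xₙ − yₙ‖·‖xₙ*‖ = λ < 1. Then (yₙ) satisfies the Grunblum condition with constant (1+λ)M/(1−λ): for all scalars and m ≤ n, ‖∑_{i=1}^m aᵢyᵢ‖ ≤ ((1+λ)M/(1−λ))‖∑_{i=1}^n aᵢyᵢ‖. -/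
open Filter Topology

variable (𝕜 : Type*) [RCLike 𝕜]
variable {X : Type*} [NormedAddCommGroup X] [NormedSpace 𝕜 X]

lemma expands_of_eventually (x : ℕ → X) (a : ℕ → 𝕜) (v : X) (N : ℕ)
    (h : ∀ k ≥ N, partialSum 𝕜 x a k = v) : Expands 𝕜 x a v := by
  apply Tendsto.congr' _ (tendsto_const_nhds : Tendsto (fun _ : ℕ => v) atTop (nhds v))
  filter_upwards [eventually_ge_atTop N] with k hk using (h k hk).symm

lemma expands_single (x : ℕ → X) (i : ℕ) :
    Expands 𝕜 x (fun j => if j = i then (1:𝕜) else 0) (x i) := by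
  apply expands_of_eventually 𝕜 x _ _ (i+1)
  intro k hk
  unfold partialSum
  simp only [ite_smul, one_smul, zero_smul]
  simp [Finset.sum_ite_eq' (Finset.range k) i, Finset.mem_range.2 hk]

lemma expands_trunc (x : ℕ → X) (a : ℕ → 𝕜) (n : ℕ) :
    Expands 𝕜 x (fun j => if j < n then a j else 0) (partialSum 𝕜 x a n) := by
  apply expands_of_eventually 𝕜 x _ _ n
  intro k hk
  unfold partialSum
  rw [← Finset.sum_subset (Finset.range_subset_range.2 hk)]
  · exact Finset.sum_congr rfl (fun i hi => by simp [Finset.mem_range.1 hi])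
  · intro i _ hi
    simp only [ite_smul, zero_smul, ite_eq_right_iff]
    exact fun h => (hi (Finset.mem_range.2 h)).elim

/-- under the perturbation hypothesis, `(yₙ)` satisfies the Grunblum
condition with constant `(1+λ)M/(1-λ)`. -/
theorem stmt12 (x y : ℕ → X) (hx : IsEssentialBasicSeq 𝕜 x)
    (M : ℝ) (hM : 1 ≤ M) (hG : Grunblum 𝕜 x M)
    (K : ℕ → ℝ)
    (hK : ∀ (n : ℕ) (a : ℕ → 𝕜) (v : X), Expands 𝕜 x a v → ‖a n‖ ≤ K n * ‖v‖)
    (hsum : Summable fun n => ‖x n - y n‖ * K n)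
    (hlam : (∑' n, ‖x n - y n‖ * K n) < 1) :
    Grunblum 𝕜 y ((1 + ∑' m, ‖x m - y m‖ * K m) * M / (1 - ∑' m, ‖x m - y m‖ * K m)) := by
  set lam := ∑' m, ‖x m - y m‖ * K m with hlamdef
  -- K is nonnegative
  have hKpos : ∀ i, 0 ≤ K i := by
    intro i
    have h1 := hK i _ _ (expands_single 𝕜 x i)
    norm_num at h1
    nlinarith [norm_nonneg (x i)]
  have hterm : ∀ i, 0 ≤ ‖x i - y i‖ * K i :=
    fun i => mul_nonneg (norm_nonneg _) (hKpos i)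
  have hlam0 : 0 ≤ lam := tsum_nonneg hterm
  intro a m n hmn
  -- coefficient bounds
  have hcoef : ∀ i < n, ‖a i‖ ≤ K i * ‖partialSum 𝕜 x a n‖ := by
    intro i hi
    have := hK i _ _ (expands_trunc 𝕜 x a n)
    simpa [if_pos hi] using this
  -- difference bound
  have hdiff : ∀ k ≤ n, ‖partialSum 𝕜 x a k - partialSum 𝕜 y a k‖ ≤ lam * ‖partialSum 𝕜 x a n‖ := by
    intro k hk
    have h1 : partialSum 𝕜 x a k - partialSum 𝕜 y a k = ∑ i ∈ Finset.range k, a i • (x i - y i) := by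
      unfold partialSum
      rw [← Finset.sum_sub_distrib]
      exact Finset.sum_congr rfl fun i _ => (smul_sub (a i) (x i) (y i)).symm
    rw [h1]
    calc ‖∑ i ∈ Finset.range k, a i • (x i - y i)‖
        ≤ ∑ i ∈ Finset.range k, ‖a i • (x i - y i)‖ := norm_sum_le _ _
      _ ≤ ∑ i ∈ Finset.range k, (‖x i - y i‖ * K i) * ‖partialSum 𝕜 x a n‖ := by
          apply Finset.sum_le_sum
          intro i hi
          rw [norm_smul]
          have hib : i < n := lt_of_lt_of_le (Finset.mem_range.1 hi) hk
          calc ‖a i‖ * ‖x i - y i‖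
              ≤ (K i * ‖partialSum 𝕜 x a n‖) * ‖x i - y i‖ :=
                mul_le_mul_of_nonneg_right (hcoef i hib) (norm_nonneg _)
            _ = (‖x i - y i‖ * K i) * ‖partialSum 𝕜 x a n‖ := by ring
      _ = (∑ i ∈ Finset.range k, ‖x i - y i‖ * K i) * ‖partialSum 𝕜 x a n‖ := by
          rw [Finset.sum_mul]
      _ ≤ lam * ‖partialSum 𝕜 x a n‖ := by
          apply mul_le_mul_of_nonneg_right _ (norm_nonneg _)
          exact Summable.sum_le_tsum _ (fun i _ => hterm i) hsum
  set A := ‖partialSum 𝕜 x a n‖ with hA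
  set B := ‖partialSum 𝕜 y a n‖ with hB
  have hA0 : 0 ≤ A := norm_nonneg _
  have hB0 : 0 ≤ B := norm_nonneg _
  have h2 : (1 - lam) * A ≤ B := by
    have := hdiff n le_rfl
    have h3 : A - B ≤ lam * A := le_trans (by
      have := norm_sub_norm_le (partialSum 𝕜 x a n) (partialSum 𝕜 y a n)
      linarith [this]) this
    nlinarith
  have h4 : ‖partialSum 𝕜 y a m‖ ≤ (M + lam) * A := by
    have h5 := hdiff m hmn
    have h6 : ‖partialSum 𝕜 y a m‖ ≤ ‖partialSum 𝕜 x a m‖ + ‖partialSum 𝕜 x a m - partialSum 𝕜 y a m‖ := by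
      have := norm_sub_le (partialSum 𝕜 x a m) (partialSum 𝕜 x a m - partialSum 𝕜 y a m)
      simpa using this
    have h7 := hG a m n hmn
    nlinarith
  have hne : (1 - lam) ≠ 0 := by linarith
  have hc : ((1 + lam) * M / (1 - lam)) * (1 - lam) = (1 + lam) * M := div_mul_cancel₀ _ hne
  have hcnn : 0 ≤ (1 + lam) * M / (1 - lam) :=
    div_nonneg (mul_nonneg (by linarith) (by linarith)) (by linarith)
  have h8 : ((1+lam)*M/(1-lam)) * ((1-lam)*A) ≤ ((1+lam)*M/(1-lam)) * B :=
    mul_le_mul_of_nonneg_left h2 hcnn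
  have h9 : ((1+lam)*M/(1-lam)) * ((1-lam)*A) = (1+lam)*M*A := by rw [← mul_assoc, hc]
  nlinarith [mul_nonneg (mul_nonneg hlam0 hA0) (sub_nonneg.2 hM)]
end

section
/- Every infinite-dimensional normed space contains an essential basic sequence, i.e., a sequence (xₙ) of nonzero vectors that is an essential Schauder basis of the closure of its linear span. -/
open Filter Topology

variable (𝕜 : Type*) [RCLike 𝕜]
variable {X : Type*} [NormedAddCommGroup X] [NormedSpace 𝕜 X]

lemma partialSum_succ (x : ℕ → X) (a : ℕ → 𝕜) (n : ℕ) :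
    partialSum 𝕜 x a (n+1) = partialSum 𝕜 x a n + a n • x n :=
  Finset.sum_range_succ _ _

/-- The norm bound for expansions, from Grunblum. -/
lemma norm_partialSum_le (x : ℕ → X) {M : ℝ} (hG : Grunblum 𝕜 x M)
    {a : ℕ → 𝕜} {v : X} (h : Expands 𝕜 x a v) (n : ℕ) :
    ‖partialSum 𝕜 x a n‖ ≤ M * ‖v‖ := by
  have h1 : Tendsto (fun k => M * ‖partialSum 𝕜 x a k‖) atTop (nhds (M * ‖v‖)) :=
    (h.norm).const_mul M
  refine ge_of_tendsto h1 ?_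
  filter_upwards [eventually_ge_atTop n] with k hk
  exact hG a n k hk

/-- Uniqueness: expansions of 0 are trivial. -/
lemma eq_zero_of_expands_zero (x : ℕ → X) (hx : ∀ n, x n ≠ 0) {M : ℝ}
    (hG : Grunblum 𝕜 x M) {a : ℕ → 𝕜} (h : Expands 𝕜 x a (0:X)) :
    a = 0 := by
  have hS : ∀ n, partialSum 𝕜 x a n = 0 := by
    intro n
    have := norm_partialSum_le 𝕜 x hG h n
    rw [norm_zero, mul_zero] at this
    exact norm_le_zero_iff.mp this
  funext n
  have h1 := hS (n+1)
  rw [partialSum_succ, hS n, zero_add] at h1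
  rcases smul_eq_zero.mp h1 with h2 | h2
  · exact h2
  · exact absurd h2 (hx n)

/-- Representation of span elements by finitely supported coefficient functions. -/
lemma exists_repr (x : ℕ → X) {w : X} (hw : w ∈ Submodule.span 𝕜 (Set.range x)) :
    ∃ (c : ℕ → 𝕜) (N : ℕ), (∀ i, N ≤ i → c i = 0) ∧ partialSum 𝕜 x c N = w := by
  obtain ⟨c₀, hc₀⟩ := Finsupp.mem_span_range_iff_exists_finsupp.mp hw
  classical
  set N : ℕ := if h : c₀.support.Nonempty then c₀.support.max' h + 1 else 0 with hN
  have hsupp : ∀ i, N ≤ i → c₀ i = 0 := by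
    intro i hi
    by_contra hne
    have hmem : i ∈ c₀.support := Finsupp.mem_support_iff.mpr hne
    have hne' : c₀.support.Nonempty := ⟨i, hmem⟩
    rw [hN, dif_pos hne'] at hi
    have := Finset.le_max' c₀.support i hmem
    omega
  refine ⟨c₀, N, hsupp, ?_⟩
  rw [← hc₀, Finsupp.sum]
  unfold partialSum
  refine (Finset.sum_subset ?_ ?_).symm
  · intro i hi
    rw [Finset.mem_range]
    by_contra hlt
    exact (Finsupp.mem_support_iff.mp hi) (hsupp i (by omega))
  · intro i _ hi
    rw [Finsupp.notMem_support_iff.mp hi, zero_smul]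

lemma expands_unique (x : ℕ → X) (hx : ∀ n, x n ≠ 0) {M : ℝ} (hG : Grunblum 𝕜 x M)
    {a b : ℕ → 𝕜} {v : X} (ha : Expands 𝕜 x a v) (hb : Expands 𝕜 x b v) : a = b := by
  have hsub : Expands 𝕜 x (a - b) 0 := by
    have h := ha.sub hb
    rw [sub_self] at h
    unfold Expands
    convert h using 1
    funext n
    exact partialSum_sub 𝕜 x a b n
  have h0 := eq_zero_of_expands_zero 𝕜 x hx hG hsub
  funext n
  have := congrFun h0 n
  simpa [sub_eq_zero] using this

lemma exists_expansion (x : ℕ → X) (hx1 : ∀ n, ‖x n‖ = 1) {M : ℝ} (hM : 1 ≤ M)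
    (hG : Grunblum 𝕜 x M) {v : X}
    (hv : v ∈ closure (Submodule.span 𝕜 (Set.range x) : Set X)) :
    ∃ a : ℕ → 𝕜, Expands 𝕜 x a v := by
  have hM0 : (0:ℝ) < M := lt_of_lt_of_le one_pos hM
  have happrox : ∀ k : ℕ, ∃ y ∈ (Submodule.span 𝕜 (Set.range x) : Set X),
      ‖v - y‖ < (1/2:ℝ)^k := by
    intro k
    obtain ⟨y, hy, hd⟩ := Metric.mem_closure_iff.mp hv ((1/2:ℝ)^k) (by positivity)
    exact ⟨y, hy, by rwa [dist_eq_norm] at hd⟩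
  choose y hyspan hyv using happrox
  choose c N hcN hcrep using fun k => exists_repr 𝕜 x (hyspan k)
  have key : ∀ j k n, ‖partialSum 𝕜 x (c j) n - partialSum 𝕜 x (c k) n‖ ≤
      M * ‖y j - y k‖ := by
    intro j k n
    set n₀ := max n (max (N j) (N k)) with hn₀
    have h1 : ‖partialSum 𝕜 x (c j - c k) n‖ ≤ M * ‖partialSum 𝕜 x (c j - c k) n₀‖ :=
      hG _ n n₀ (le_max_left _ _)
    rw [partialSum_sub, partialSum_sub,
      partialSum_stable 𝕜 x (c j) (hcN j)
        (le_trans (le_max_left _ _) (le_max_right _ _)),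
      partialSum_stable 𝕜 x (c k) (hcN k)
        (le_trans (le_max_right _ _) (le_max_right _ _)),
      hcrep j, hcrep k] at h1
    exact h1
  have coefkey : ∀ j k i, ‖c j i - c k i‖ ≤ 2 * M * ‖y j - y k‖ := by
    intro j k i
    have e1 : (c j i - c k i) • x i =
        (partialSum 𝕜 x (c j) (i+1) - partialSum 𝕜 x (c k) (i+1)) -
          (partialSum 𝕜 x (c j) i - partialSum 𝕜 x (c k) i) := by
      rw [partialSum_succ, partialSum_succ, sub_smul]; abel
    have e2 : ‖(c j i - c k i) • x i‖ = ‖c j i - c k i‖ := by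
      rw [norm_smul, hx1 i, mul_one]
    calc ‖c j i - c k i‖ = ‖(c j i - c k i) • x i‖ := e2.symm
      _ ≤ ‖partialSum 𝕜 x (c j) (i+1) - partialSum 𝕜 x (c k) (i+1)‖ +
          ‖partialSum 𝕜 x (c j) i - partialSum 𝕜 x (c k) i‖ := by
          rw [e1]; exact norm_sub_le _ _
      _ ≤ M * ‖y j - y k‖ + M * ‖y j - y k‖ := add_le_add (key j k (i+1)) (key j k i)
      _ = 2 * M * ‖y j - y k‖ := by ring
  have hyjk : ∀ j k, ‖y j - y k‖ ≤ (1/2:ℝ)^j + (1/2:ℝ)^k := by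
    intro j k
    calc ‖y j - y k‖ ≤ ‖y j - v‖ + ‖v - y k‖ := norm_sub_le_norm_sub_add_norm_sub _ _ _
      _ ≤ (1/2:ℝ)^j + (1/2:ℝ)^k := by
          have h1 := hyv j; have h2 := hyv k
          rw [norm_sub_rev] at h1
          linarith
  have hpowlt : ∀ (D : ℝ), 0 < D → ∀ ε > (0:ℝ), ∃ K : ℕ, D * (1/2:ℝ)^K < ε := by
    intro D hD ε hε
    have h2 : Tendsto (fun K : ℕ => D * (1/2:ℝ)^K) atTop (nhds 0) := by
      simpa using (tendsto_pow_atTop_nhds_zero_of_lt_one (by norm_num : (0:ℝ) ≤ 1/2)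
        (by norm_num : (1/2:ℝ) < 1)).const_mul D
    exact (h2.eventually (gt_mem_nhds hε)).exists
  have hcauchy : ∀ i, CauchySeq (fun k => c k i) := by
    intro i
    rw [Metric.cauchySeq_iff]
    intro ε hε
    obtain ⟨K, hK⟩ := hpowlt (4*M) (by positivity) ε hε
    refine ⟨K, fun m hm n hn => ?_⟩
    rw [dist_eq_norm]
    have hm' : (1/2:ℝ)^m ≤ (1/2:ℝ)^K := pow_le_pow_of_le_one (by norm_num) (by norm_num) hm
    have hn' : (1/2:ℝ)^n ≤ (1/2:ℝ)^K := pow_le_pow_of_le_one (by norm_num) (by norm_num) hn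
    calc ‖c m i - c n i‖ ≤ 2*M*‖y m - y n‖ := coefkey m n i
      _ ≤ 2*M*((1/2:ℝ)^m + (1/2:ℝ)^n) := by
          exact mul_le_mul_of_nonneg_left (hyjk m n) (by positivity)
      _ ≤ 2*M*((1/2:ℝ)^K + (1/2:ℝ)^K) := by
          refine mul_le_mul_of_nonneg_left (by linarith) (by positivity)
      _ = 4*M*(1/2:ℝ)^K := by ring
      _ < ε := hK
  choose a ha using fun i => cauchySeq_tendsto_of_complete (hcauchy i)
  have hSconv : ∀ n, Tendsto (fun k => partialSum 𝕜 x (c k) n) atTop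
      (nhds (partialSum 𝕜 x a n)) := by
    intro n
    unfold partialSum
    exact tendsto_finset_sum _ (fun i _ => (ha i).smul_const (x i))
  have hbound : ∀ k n, ‖partialSum 𝕜 x a n - partialSum 𝕜 x (c k) n‖ ≤
      M * (1/2:ℝ)^k := by
    intro k n
    have hf : Tendsto (fun j => ‖partialSum 𝕜 x (c j) n - partialSum 𝕜 x (c k) n‖)
        atTop (nhds ‖partialSum 𝕜 x a n - partialSum 𝕜 x (c k) n‖) :=
      ((hSconv n).sub tendsto_const_nhds).norm
    have hg : Tendsto (fun j => M * ((1/2:ℝ)^j + (1/2:ℝ)^k)) atTop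
        (nhds (M * (1/2:ℝ)^k)) := by
      have : Tendsto (fun j : ℕ => (1/2:ℝ)^j + (1/2:ℝ)^k) atTop (nhds ((0:ℝ) + (1/2:ℝ)^k)) :=
        (tendsto_pow_atTop_nhds_zero_of_lt_one (by norm_num) (by norm_num)).add
          tendsto_const_nhds
      simpa using this.const_mul M
    refine le_of_tendsto_of_tendsto' hf hg ?_
    intro j
    calc ‖partialSum 𝕜 x (c j) n - partialSum 𝕜 x (c k) n‖ ≤ M * ‖y j - y k‖ := key j k n
      _ ≤ M * ((1/2:ℝ)^j + (1/2:ℝ)^k) :=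
          mul_le_mul_of_nonneg_left (hyjk j k) (le_of_lt hM0)
  refine ⟨a, ?_⟩
  unfold Expands
  rw [Metric.tendsto_atTop]
  intro ε hε
  obtain ⟨k, hk⟩ := hpowlt (M+2) (by positivity) ε hε
  refine ⟨N k, fun n hn => ?_⟩
  rw [dist_eq_norm]
  have h1 : partialSum 𝕜 x (c k) n = y k := by
    rw [partialSum_stable 𝕜 x (c k) (hcN k) hn, hcrep k]
  have h2 : ‖partialSum 𝕜 x (c k) n - v‖ < (1/2:ℝ)^k := by
    rw [h1, norm_sub_rev]; exact hyv k
  have hpos : (0:ℝ) < (1/2:ℝ)^k := by positivity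
  calc ‖partialSum 𝕜 x a n - v‖
      ≤ ‖partialSum 𝕜 x a n - partialSum 𝕜 x (c k) n‖ +
        ‖partialSum 𝕜 x (c k) n - v‖ := norm_sub_le_norm_sub_add_norm_sub _ _ _
    _ < M * (1/2:ℝ)^k + (1/2:ℝ)^k * 2 := by
        have := hbound k n
        nlinarith [h2]
    _ ≤ (M+2) * (1/2:ℝ)^k := by ring_nf; nlinarith
    _ < ε := hk

theorem mazur_step (hX : ¬ FiniteDimensional 𝕜 X) (F : Submodule 𝕜 X)
    [FiniteDimensional 𝕜 F] {ε : ℝ} (hε : 0 < ε) :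
    ∃ z : X, ‖z‖ = 1 ∧ ∀ y ∈ F, ∀ t : 𝕜, ‖y‖ ≤ (1 + ε) * ‖y + t • z‖ := by
  have h1ε : (0:ℝ) < 1 + ε := by linarith
  set δ : ℝ := ε / (1 + ε) with hδdef
  have hδ : 0 < δ := div_pos hε h1ε
  have h1δ : 1 - δ = 1 / (1 + ε) := by
    rw [hδdef]; field_simp; ring
  -- the unit sphere of F is compact
  have hcomp : IsCompact ((↑) '' (Metric.sphere (0:F) 1) : Set X) := by
    refine (IsCompact.image ?_ continuous_subtype_val)
    exact isCompact_sphere 0 1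
  obtain ⟨t, hts, htfin, htcov⟩ := hcomp.finite_cover_balls hδ
  haveI := htfin.fintype
  -- dual functionals
  have hnorm1 : ∀ c ∈ t, ‖c‖ = 1 := by
    intro c hc
    obtain ⟨w, hws, hwc⟩ := hts hc
    have hw1 : ‖w‖ = 1 := by simpa using hws
    rw [← hwc]; simpa using hw1
  have hne : ∀ c : t, (c : X) ≠ 0 := fun c =>
    norm_ne_zero_iff.mp (by rw [hnorm1 c c.2]; norm_num)
  choose f hf1 hf2 using fun c : t => exists_dual_vector 𝕜 (c : X) (norm_ne_zero_iff.mpr (hne c))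
  -- a nonzero vector killed by all the functionals
  set Φ : X →ₗ[𝕜] (t → 𝕜) := LinearMap.pi (fun c => (f c).toLinearMap) with hΦ
  have hninj : ¬ Function.Injective Φ := by
    intro hinj
    exact hX (FiniteDimensional.of_injective Φ hinj)
  rw [← LinearMap.ker_eq_bot] at hninj
  obtain ⟨z₀, hz₀mem, hz₀⟩ := Submodule.exists_mem_ne_zero_of_ne_bot hninj
  have hfz₀ : ∀ c : t, f c z₀ = 0 := by
    intro c
    have := (LinearMap.mem_ker.mp hz₀mem)
    exact congrFun this c
  have hz₀n : ‖z₀‖ ≠ 0 := by simpa using hz₀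
  set z : X := ((‖z₀‖ : 𝕜))⁻¹ • z₀ with hz
  have hzn : ‖z‖ = 1 := by
    rw [hz, norm_smul, norm_inv, RCLike.norm_ofReal,
      abs_of_nonneg (norm_nonneg z₀), inv_mul_cancel₀ hz₀n]
  have hfz : ∀ c : t, f c z = 0 := by
    intro c; rw [hz]; simp [hfz₀ c]
  refine ⟨z, hzn, ?_⟩
  -- main estimate for unit vectors
  have key : ∀ u : X, u ∈ F → ‖u‖ = 1 → ∀ s : 𝕜, 1 - δ ≤ ‖u + s • z‖ := by
    intro u huF hun s
    have huS : u ∈ ((↑) '' (Metric.sphere (0:F) 1) : Set X) := by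
      refine ⟨⟨u, huF⟩, ?_, rfl⟩
      simp only [Metric.mem_sphere, dist_zero_right]
      exact_mod_cast hun
    obtain ⟨c, hct, hcball⟩ := Set.mem_iUnion₂.mp (htcov huS)
    have hcu : ‖u - c‖ < δ := by
      have := Metric.mem_ball.mp hcball
      rwa [dist_eq_norm] at this
    have hfc : ‖f ⟨c, hct⟩ u‖ ≥ 1 - δ := by
      have h1 : (f ⟨c, hct⟩) c = (‖c‖ : 𝕜) := hf2 ⟨c, hct⟩
      have hcn : ‖(c:X)‖ = 1 := hnorm1 c hct
      have h2 : ‖(f ⟨c, hct⟩) (c - u)‖ ≤ ‖u - c‖ := by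
        calc ‖(f ⟨c, hct⟩) (c - u)‖ ≤ ‖f ⟨c, hct⟩‖ * ‖(c:X) - u‖ :=
              (f ⟨c, hct⟩).le_opNorm _
          _ = ‖u - c‖ := by rw [hf1, norm_sub_rev]; ring
      have h3 : ‖(f ⟨c, hct⟩) c‖ = 1 := by rw [h1]; simp [hcn]
      calc ‖(f ⟨c, hct⟩) u‖ ≥ ‖(f ⟨c, hct⟩) c‖ - ‖(f ⟨c, hct⟩) (c - u)‖ := by
            have := norm_sub_norm_le ((f ⟨c, hct⟩) c) ((f ⟨c, hct⟩) (c - u))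
            simp only [map_sub] at this
            simpa using this
        _ ≥ 1 - δ := by rw [h3]; linarith
    calc (1:ℝ) - δ ≤ ‖f ⟨c, hct⟩ u‖ := hfc
      _ = ‖f ⟨c, hct⟩ (u + s • z)‖ := by
          simp [map_add, map_smul, hfz ⟨c, hct⟩]
      _ ≤ ‖f ⟨c, hct⟩‖ * ‖u + s • z‖ := (f ⟨c, hct⟩).le_opNorm _
      _ = ‖u + s • z‖ := by rw [hf1]; ring
  -- general case by scaling
  intro y hyF s
  rcases eq_or_ne y 0 with rfl | hy0
  · simp; positivity
  have hyn : ‖y‖ ≠ 0 := norm_ne_zero_iff.mpr hy0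
  have hyp : 0 < ‖y‖ := lt_of_le_of_ne (norm_nonneg y) (Ne.symm hyn)
  set u : X := ((‖y‖ : 𝕜))⁻¹ • y with hu
  have huF : u ∈ F := F.smul_mem _ hyF
  have hun : ‖u‖ = 1 := by
    rw [hu, norm_smul, norm_inv, RCLike.norm_ofReal,
      abs_of_nonneg (norm_nonneg y), inv_mul_cancel₀ hyn]
  have h := key u huF hun (((‖y‖ : 𝕜))⁻¹ * s)
  have hrw : u + (((‖y‖ : 𝕜))⁻¹ * s) • z = ((‖y‖ : 𝕜))⁻¹ • (y + s • z) := by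
    rw [hu]; module
  rw [hrw, norm_smul, norm_inv, RCLike.norm_ofReal, abs_of_nonneg (norm_nonneg y)] at h
  have h2 : ‖y‖ * (1 - δ) ≤ ‖y + s • z‖ := by
    have := mul_le_mul_of_nonneg_left h (norm_nonneg y)
    rwa [← mul_assoc, mul_inv_cancel₀ hyn, one_mul] at this
  have h3 : (1 - δ) * (1 + ε) = 1 := by
    rw [h1δ]; field_simp
  nlinarith [h2, h3, norm_nonneg (y + s • z), hyp, h1ε]

noncomputable def mazurSeq (hX : ¬ FiniteDimensional 𝕜 X) : ℕ → X
  | n =>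
    haveI : FiniteDimensional 𝕜
        (Submodule.span 𝕜 (Set.range (fun i : Fin n => mazurSeq hX i))) :=
      FiniteDimensional.span_of_finite 𝕜 (Set.finite_range _)
    Classical.choose (mazur_step 𝕜 hX
      (Submodule.span 𝕜 (Set.range (fun i : Fin n => mazurSeq hX i)))
      (show (0:ℝ) < (1/2)^(n+1) by positivity))
  decreasing_by all_goals exact i.2

theorem mazurSeq_spec (hX : ¬ FiniteDimensional 𝕜 X) (n : ℕ) :
    ‖mazurSeq 𝕜 hX n‖ = 1 ∧
      ∀ y ∈ Submodule.span 𝕜 (Set.range (fun i : Fin n => mazurSeq 𝕜 hX i)),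
        ∀ t : 𝕜, ‖y‖ ≤ (1 + (1/2)^(n+1)) * ‖y + t • mazurSeq 𝕜 hX n‖ := by
  haveI : FiniteDimensional 𝕜
      (Submodule.span 𝕜 (Set.range (fun i : Fin n => mazurSeq 𝕜 hX i))) :=
    FiniteDimensional.span_of_finite 𝕜 (Set.finite_range _)
  rw [mazurSeq]
  exact Classical.choose_spec (mazur_step 𝕜 hX
      (Submodule.span 𝕜 (Set.range (fun i : Fin n => mazurSeq 𝕜 hX i)))
      (show (0:ℝ) < (1/2)^(n+1) by positivity))

lemma partialSum_mem_span (x : ℕ → X) (a : ℕ → 𝕜) (n : ℕ) :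
    partialSum 𝕜 x a n ∈ Submodule.span 𝕜 (Set.range (fun i : Fin n => x i)) := by
  apply Submodule.sum_mem
  intro i hi
  exact Submodule.smul_mem _ _
    (Submodule.subset_span ⟨⟨i, Finset.mem_range.mp hi⟩, rfl⟩)

lemma grunblum_of_spec (x : ℕ → X)
    (hspec : ∀ n, ∀ y ∈ Submodule.span 𝕜 (Set.range (fun i : Fin n => x i)),
        ∀ t : 𝕜, ‖y‖ ≤ (1 + (1/2:ℝ)^(n+1)) * ‖y + t • x n‖) :
    Grunblum 𝕜 x 3 := by
  intro a m n hmn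
  -- step inequality
  have step : ∀ k, ‖partialSum 𝕜 x a k‖ ≤
      (1 + (1/2:ℝ)^(k+1)) * ‖partialSum 𝕜 x a (k+1)‖ := by
    intro k
    have h := hspec k _ (partialSum_mem_span 𝕜 x a k) (a k)
    have hsucc : partialSum 𝕜 x a (k+1) = partialSum 𝕜 x a k + a k • x k :=
      Finset.sum_range_succ _ _
    rwa [← hsucc] at h
  -- iterate
  have iter : ∀ n, m ≤ n → ‖partialSum 𝕜 x a m‖ ≤
      (∏ i ∈ Finset.Ico m n, (1 + (1/2:ℝ)^(i+1))) * ‖partialSum 𝕜 x a n‖ := by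
    intro n hn
    induction n, hn using Nat.le_induction with
    | base => simp
    | succ n hn ih =>
      calc ‖partialSum 𝕜 x a m‖
          ≤ (∏ i ∈ Finset.Ico m n, (1 + (1/2:ℝ)^(i+1))) * ‖partialSum 𝕜 x a n‖ := ih
        _ ≤ (∏ i ∈ Finset.Ico m n, (1 + (1/2:ℝ)^(i+1))) *
            ((1 + (1/2:ℝ)^(n+1)) * ‖partialSum 𝕜 x a (n+1)‖) := by
            refine mul_le_mul_of_nonneg_left (step n) ?_
            apply Finset.prod_nonneg
            intro i _; positivity
        _ = (∏ i ∈ Finset.Ico m (n+1), (1 + (1/2:ℝ)^(i+1))) *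
            ‖partialSum 𝕜 x a (n+1)‖ := by
            rw [Finset.prod_Ico_succ_top hn]; ring
  -- bound the product by 3
  have prodle : (∏ i ∈ Finset.Ico m n, (1 + (1/2:ℝ)^(i+1))) ≤ 3 := by
    have h1 : (∏ i ∈ Finset.Ico m n, (1 + (1/2:ℝ)^(i+1))) ≤
        ∏ i ∈ Finset.Ico m n, Real.exp ((1/2:ℝ)^(i+1)) := by
      apply Finset.prod_le_prod
      · intro i _; positivity
      · intro i _
        have := Real.add_one_le_exp ((1/2:ℝ)^(i+1))
        linarith
    have h2 : (∑ i ∈ Finset.Ico m n, (1/2:ℝ)^(i+1)) ≤ 1 := by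
      have hsub : (∑ i ∈ Finset.Ico m n, (1/2:ℝ)^(i+1)) ≤
          ∑ i ∈ Finset.range n, (1/2:ℝ)^(i+1) := by
        apply Finset.sum_le_sum_of_subset_of_nonneg
        · intro i hi
          simp only [Finset.mem_range, Finset.mem_Ico] at *
          exact hi.2
        · intro i _ _; positivity
      have : (∑ i ∈ Finset.range n, (1/2:ℝ)^(i+1)) =
          (1/2) * ∑ i ∈ Finset.range n, (1/2:ℝ)^i := by
        rw [Finset.mul_sum]
        congr 1; ext i; ring
      have hg := sum_geometric_two_le n
      rw [this] at hsub
      linarith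
    calc (∏ i ∈ Finset.Ico m n, (1 + (1/2:ℝ)^(i+1)))
        ≤ ∏ i ∈ Finset.Ico m n, Real.exp ((1/2:ℝ)^(i+1)) := h1
      _ = Real.exp (∑ i ∈ Finset.Ico m n, (1/2:ℝ)^(i+1)) := (Real.exp_sum _ _).symm
      _ ≤ Real.exp 1 := Real.exp_le_exp.mpr h2
      _ ≤ 3 := by have := Real.exp_one_lt_d9; norm_num at this ⊢; linarith
  calc ‖partialSum 𝕜 x a m‖
      ≤ (∏ i ∈ Finset.Ico m n, (1 + (1/2:ℝ)^(i+1))) * ‖partialSum 𝕜 x a n‖ :=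
        iter n hmn
    _ ≤ 3 * ‖partialSum 𝕜 x a n‖ :=
        mul_le_mul_of_nonneg_right prodle (norm_nonneg _)


/-- every infinite-dimensional normed space contains an essential basic
sequence of nonzero vectors. -/
theorem stmt16 (hX : ¬ FiniteDimensional 𝕜 X) :
    ∃ x : ℕ → X, (∀ n, x n ≠ 0) ∧ IsEssentialBasicSeq 𝕜 x := by
  set x := mazurSeq 𝕜 hX with hxdef
  have hx1 : ∀ n, ‖x n‖ = 1 := fun n => (mazurSeq_spec 𝕜 hX n).1
  have hxne : ∀ n, x n ≠ 0 := fun n => norm_ne_zero_iff.mp (by rw [hx1 n]; norm_num)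
  have hG : Grunblum 𝕜 x 3 := grunblum_of_spec 𝕜 x (fun n => (mazurSeq_spec 𝕜 hX n).2)
  refine ⟨x, hxne, ?_, ⟨3, by norm_num, ?_⟩⟩
  · intro v hv
    obtain ⟨a, ha⟩ := exists_expansion 𝕜 x hx1 (by norm_num) hG hv
    exact ⟨a, ha, fun b hb => expands_unique 𝕜 x hxne hG hb ha⟩
  · intro a v h n
    exact norm_partialSum_le 𝕜 x hG h n
end

section
/- Let E be a normed space with an essential Schauder basis (xₙ), and let x = ∑_{i=1}^∞ aᵢxᵢ ∈ E. If (xₙ) satisfies the Grunblum inequality with constant M, then ‖x‖ ≤ supₙ ‖∑_{i=1}^n aᵢxᵢ‖ ≤ M‖x‖. -/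
open Filter Topology

variable (𝕜 : Type*) [RCLike 𝕜]
variable {X : Type*} [NormedAddCommGroup X] [NormedSpace 𝕜 X]

/-- for a Schauder basis satisfying the Grunblum inequality with constant `M`
and `x = ∑ aᵢxᵢ`, we have `‖x‖ ≤ supₙ ‖∑_{i≤n} aᵢxᵢ‖ ≤ M‖x‖`. -/
theorem stmt17 (x : ℕ → X) (hx : IsSchauderBasis 𝕜 x)
    (M : ℝ) (hM : 1 ≤ M) (hG : Grunblum 𝕜 x M) :
    ∀ (a : ℕ → 𝕜) (v : X), Expands 𝕜 x a v →
      ‖v‖ ≤ (⨆ n, ‖partialSum 𝕜 x a n‖) ∧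
      (⨆ n, ‖partialSum 𝕜 x a n‖) ≤ M * ‖v‖ := by
  intro a v hav
  have hnorm : Tendsto (fun n => ‖partialSum 𝕜 x a n‖) atTop (nhds ‖v‖) :=
    hav.norm
  have hbound : ∀ m, ‖partialSum 𝕜 x a m‖ ≤ M * ‖v‖ := by
    intro m
    have h1 : Tendsto (fun n => M * ‖partialSum 𝕜 x a n‖) atTop (nhds (M * ‖v‖)) :=
      hnorm.const_mul M
    refine ge_of_tendsto h1 ?_
    filter_upwards [eventually_ge_atTop m] with n hn
    exact hG a m n hn
  have hbdd : BddAbove (Set.range fun n => ‖partialSum 𝕜 x a n‖) :=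
    ⟨M * ‖v‖, by rintro _ ⟨m, rfl⟩; exact hbound m⟩
  refine ⟨?_, ciSup_le hbound⟩
  exact le_of_tendsto hnorm (Filter.Eventually.of_forall fun n => le_ciSup hbdd n)
end

section
/- Let X be a normed space with an essential basic sequence (xₙ) and let (yₙ) satisfy ∑ₙ ‖xₙ − yₙ‖·‖xₙ*‖ = λ < 1. Then the linear map T : span{xₙ} → closure(span{yₙ}) defined by T(∑ aᵢxᵢ) = ∑ aᵢyᵢ is well-defined and bounded with ‖T‖ ≤ 1 + λ. -/
open Filter Topology

variable (𝕜 : Type*) [RCLike 𝕜]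
variable {X : Type*} [NormedAddCommGroup X] [NormedSpace 𝕜 X]

/-- under the perturbation hypothesis `λ < 1`, the map
`T(∑ aᵢxᵢ) = ∑ aᵢyᵢ` is a well-defined linear map on the span of `(xₙ)`, valued in the
closure of the span of `(yₙ)`, and bounded with `‖T‖ ≤ 1 + λ`. -/
theorem stmt18 (x y : ℕ → X) (hx : IsEssentialBasicSeq 𝕜 x)
    (K : ℕ → ℝ)
    (hK : ∀ (n : ℕ) (a : ℕ → 𝕜) (v : X), Expands 𝕜 x a v → ‖a n‖ ≤ K n * ‖v‖)
    (hsum : Summable fun n => ‖x n - y n‖ * K n)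
    (hlam : (∑' n, ‖x n - y n‖ * K n) < 1) :
    ∃ T : Submodule.span 𝕜 (Set.range x) →ₗ[𝕜] X,
      (∀ (a : ℕ → 𝕜) (k : ℕ) (z : Submodule.span 𝕜 (Set.range x)),
          (z : X) = partialSum 𝕜 x a k → T z = partialSum 𝕜 y a k) ∧
      (∀ z : Submodule.span 𝕜 (Set.range x),
          T z ∈ closure (Submodule.span 𝕜 (Set.range y) : Set X)) ∧
      ∀ z : Submodule.span 𝕜 (Set.range x),
        ‖T z‖ ≤ (1 + ∑' m, ‖x m - y m‖ * K m) * ‖z‖ := by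
  classical
  -- Step 0: a helper to build expansions from finitely-supported coefficient functions
  have hexp : ∀ (a : ℕ → 𝕜) (k : ℕ), (∀ i, k ≤ i → a i = 0) →
      Expands 𝕜 x a (partialSum 𝕜 x a k) := by
    intro a k hk
    apply tendsto_atTop_of_eventually_const (i₀ := k)
    intro n hn
    unfold partialSum
    rw [← Finset.sum_subset (Finset.range_subset_range.2 hn)]
    intro i hi hik
    rw [hk i (by simpa using hik), zero_smul]
  -- Step 1: linear independence of x
  have hli : LinearIndependent 𝕜 x := by
    rw [linearIndependent_iff'']
    intro s g hg hs i
    set k := s.sup id + 1 with hkdef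
    have hsk : s ⊆ Finset.range k := by
      intro j hj
      exact Finset.mem_range.2 (Nat.lt_succ_of_le (Finset.le_sup (f := id) hj))
    have hzero : ∀ j, k ≤ j → g j = 0 := by
      intro j hj
      apply hg
      intro hjs
      exact absurd (Finset.mem_range.1 (hsk hjs)) (not_lt.2 hj)
    have hps : partialSum 𝕜 x g k = 0 := by
      unfold partialSum
      rw [← Finset.sum_subset (f := fun j => g j • x j) hsk (fun j _ hj => by simp [hg j hj])]
      exact hs
    have he := hexp g k hzero
    rw [hps] at he
    have := hK i g 0 he
    simpa using this
  -- Step 2: K is positive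
  have hKpos : ∀ i, 0 < K i := by
    intro i
    set a : ℕ → 𝕜 := fun j => if j = i then 1 else 0 with ha
    have hzero : ∀ j, i + 1 ≤ j → a j = 0 := by
      intro j hj
      have hne : j ≠ i := by omega
      simp [ha, hne]
    have hps : partialSum 𝕜 x a (i + 1) = x i := by
      unfold partialSum
      rw [Finset.sum_eq_single i]
      · simp [ha]
      · intro j hj hji; simp [ha, hji]
      · intro h; exact absurd (Finset.self_mem_range_succ i) h
    have he := hexp a (i + 1) hzero
    rw [hps] at he
    have h1 := hK i a (x i) he
    simp only [ha, if_pos rfl, norm_one] at h1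
    nlinarith [norm_nonneg (x i)]
  -- Step 3: build T from the basis of the span
  set b := Module.Basis.span hli with hb
  set T : Submodule.span 𝕜 (Set.range x) →ₗ[𝕜] X :=
    (Finsupp.linearCombination 𝕜 y) ∘ₗ (b.repr : _ →ₗ[𝕜] (ℕ →₀ 𝕜)) with hT
  -- key: T agrees with partial sums
  have hTps : ∀ (a : ℕ → 𝕜) (k : ℕ) (z : Submodule.span 𝕜 (Set.range x)),
      (z : X) = partialSum 𝕜 x a k → T z = partialSum 𝕜 y a k := by
    intro a k z hz
    have hzb : z = ∑ i ∈ Finset.range k, a i • b i := by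
      apply Subtype.ext
      rw [hz]
      push_cast
      unfold partialSum
      exact Finset.sum_congr rfl fun i _ => by rw [Module.Basis.span_apply]
    rw [hzb, map_sum]
    unfold partialSum
    refine Finset.sum_congr rfl fun i _ => ?_
    rw [map_smul, hT]
    simp [Module.Basis.repr_self]
  -- every z has a canonical finite expansion
  have hrep : ∀ z : Submodule.span 𝕜 (Set.range x), ∃ (a : ℕ → 𝕜) (k : ℕ),
      (∀ i, k ≤ i → a i = 0) ∧ (z : X) = partialSum 𝕜 x a k := by
    intro z
    set c := b.repr z with hc
    set k := c.support.sup id + 1 with hk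
    refine ⟨fun i => c i, k, ?_, ?_⟩
    · intro i hi
      by_contra h
      have h1 : i ∈ c.support := Finsupp.mem_support_iff.2 h
      have h2 : i ≤ c.support.sup id := Finset.le_sup (f := id) h1
      omega
    · have : z = ∑ i ∈ Finset.range k, c i • b i := by
        conv_lhs => rw [← b.linearCombination_repr z]
        rw [Finsupp.linearCombination_apply, Finsupp.sum]
        refine Finset.sum_subset ?_ ?_
        · intro j hj
          exact Finset.mem_range.2 (Nat.lt_succ_of_le (Finset.le_sup (f := id) hj))
        · intro j _ hj
          rw [Finsupp.notMem_support_iff.1 hj, zero_smul]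
      rw [this]
      push_cast
      unfold partialSum
      exact Finset.sum_congr rfl fun i _ => by rw [Module.Basis.span_apply]
  refine ⟨T, hTps, ?_, ?_⟩
  · -- range in closure of span y
    intro z
    obtain ⟨a, k, -, hz⟩ := hrep z
    rw [hTps a k z hz]
    apply subset_closure
    unfold partialSum
    exact Submodule.sum_mem _ fun i _ =>
      Submodule.smul_mem _ _ (Submodule.subset_span ⟨i, rfl⟩)
  · -- norm bound
    intro z
    obtain ⟨a, k, ha0, hz⟩ := hrep z
    have he : Expands 𝕜 x a (z : X) := by rw [hz]; exact hexp a k ha0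
    have hai : ∀ i, ‖a i‖ ≤ K i * ‖z‖ := by
      intro i
      simpa using hK i a (z : X) he
    have hTz := hTps a k z hz
    have hdiff : T z - (z : X) = ∑ i ∈ Finset.range k, a i • (y i - x i) := by
      rw [hTz, hz]
      unfold partialSum
      rw [← Finset.sum_sub_distrib]
      exact Finset.sum_congr rfl fun i _ => by rw [smul_sub]
    have hbound : ‖T z - (z : X)‖ ≤ (∑' m, ‖x m - y m‖ * K m) * ‖z‖ := by
      rw [hdiff]
      calc ‖∑ i ∈ Finset.range k, a i • (y i - x i)‖
          ≤ ∑ i ∈ Finset.range k, ‖a i • (y i - x i)‖ := norm_sum_le _ _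
        _ ≤ ∑ i ∈ Finset.range k, (‖x i - y i‖ * K i) * ‖z‖ := by
            refine Finset.sum_le_sum fun i _ => ?_
            rw [norm_smul]
            have h1 : ‖y i - x i‖ = ‖x i - y i‖ := norm_sub_rev _ _
            rw [h1, mul_comm (‖x i - y i‖) (K i), mul_assoc]
            exact mul_le_mul_of_nonneg_right (hai i) (norm_nonneg _) |>.trans
              (le_of_eq (by ring))
        _ = (∑ i ∈ Finset.range k, ‖x i - y i‖ * K i) * ‖z‖ := by
            rw [Finset.sum_mul]
        _ ≤ (∑' m, ‖x m - y m‖ * K m) * ‖z‖ := by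
            apply mul_le_mul_of_nonneg_right _ (norm_nonneg _)
            exact Summable.sum_le_tsum _ (fun i _ => mul_nonneg (norm_nonneg _) (hKpos i).le) hsum
    calc ‖T z‖ = ‖(z : X) + (T z - (z : X))‖ := by congr 1; abel
      _ ≤ ‖(z : X)‖ + ‖T z - (z : X)‖ := norm_add_le _ _
      _ ≤ ‖z‖ + (∑' m, ‖x m - y m‖ * K m) * ‖z‖ := by
          exact add_le_add (le_of_eq rfl) hbound
      _ = (1 + ∑' m, ‖x m - y m‖ * K m) * ‖z‖ := by ring
end

section
/- Let X be a normed space and (xₙ) a sequence of nonzero vectors satisfying the Grunblum condition with constant M. Let F = span{xₙ}, E its closure, and Rₙ : E → E the unique bounded extension of the n-th partial-sum operator Tₙ on F (valued in the completion of E, but with range in F). Then for every x ∈ E, x = limₙ Rₙ(x). -/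
open Filter Topology

variable (𝕜 : Type*) [RCLike 𝕜]
variable {X : Type*} [NormedAddCommGroup X] [NormedSpace 𝕜 X]

lemma span_rep (x : ℕ → X) {v : X} (hv : v ∈ Submodule.span 𝕜 (Set.range x)) :
    ∃ (a : ℕ → 𝕜) (k : ℕ), v = partialSum 𝕜 x a k := by
  rw [Finsupp.mem_span_range_iff_exists_finsupp] at hv
  obtain ⟨c, hc⟩ := hv
  refine ⟨c, c.support.sup id + 1, ?_⟩
  rw [← hc, Finsupp.sum, partialSum]
  refine Finset.sum_subset ?_ ?_
  · intro i hi
    simp only [Finset.mem_range]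
    exact Nat.lt_succ_of_le (Finset.le_sup (f := id) hi)
  · intro i _ hi
    rw [Finsupp.notMem_support_iff.mp hi, zero_smul]

lemma Rbound (x : ℕ → X) (M : ℝ) (hM : 1 ≤ M) (hG : Grunblum 𝕜 x M)
    (R : ℕ → (Submodule.span 𝕜 (Set.range x)).topologicalClosure →L[𝕜] X)
    (hR : ∀ (n : ℕ) (a : ℕ → 𝕜) (k : ℕ)
        (z : (Submodule.span 𝕜 (Set.range x)).topologicalClosure),
        (z : X) = partialSum 𝕜 x a k → R n z = partialSum 𝕜 x a (min n k))
    (n : ℕ) (z : (Submodule.span 𝕜 (Set.range x)).topologicalClosure) :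
    ‖R n z‖ ≤ M * ‖z‖ := by
  -- first on span elements
  have key : ∀ w : (Submodule.span 𝕜 (Set.range x)).topologicalClosure,
      (w : X) ∈ Submodule.span 𝕜 (Set.range x) → ‖R n w‖ ≤ M * ‖w‖ := by
    intro w hw
    obtain ⟨a, k, hk⟩ := span_rep 𝕜 x hw
    rw [hR n a k w hk]
    calc ‖partialSum 𝕜 x a (min n k)‖ ≤ M * ‖partialSum 𝕜 x a k‖ :=
          hG a (min n k) k (min_le_right n k)
      _ = M * ‖w‖ := by rw [← hk]; rfl
  -- density
  have hz : (z : X) ∈ closure (Submodule.span 𝕜 (Set.range x) : Set X) := z.2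
  rw [mem_closure_iff_seq_limit] at hz
  obtain ⟨u, hu, hlim⟩ := hz
  let uE : ℕ → (Submodule.span 𝕜 (Set.range x)).topologicalClosure :=
    fun i => ⟨u i, subset_closure (hu i)⟩
  have hlim' : Tendsto uE atTop (nhds z) := by
    exact tendsto_subtype_rng.mpr hlim
  have h1 : Tendsto (fun i => ‖R n (uE i)‖) atTop (nhds ‖R n z‖) :=
    ((R n).continuous.tendsto z).comp hlim' |>.norm
  have h2 : Tendsto (fun i => M * ‖uE i‖) atTop (nhds (M * ‖z‖)) :=
    (tendsto_const_nhds.mul (hlim'.norm))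
  exact le_of_tendsto_of_tendsto' h1 h2 (fun i => key (uE i) (hu i))

/-- under the Grunblum condition, the continuous extensions `Rₙ` (to the
closure `E` of the span) of the partial-sum operators `Tₙ` satisfy `x = limₙ Rₙ(x)` for
every `x ∈ E`. -/
theorem stmt19 (x : ℕ → X) (hne : ∀ n, x n ≠ 0)
    (M : ℝ) (hM : 1 ≤ M) (hG : Grunblum 𝕜 x M)
    (R : ℕ → (Submodule.span 𝕜 (Set.range x)).topologicalClosure →L[𝕜] X)
    (hR : ∀ (n : ℕ) (a : ℕ → 𝕜) (k : ℕ)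
        (z : (Submodule.span 𝕜 (Set.range x)).topologicalClosure),
        (z : X) = partialSum 𝕜 x a k → R n z = partialSum 𝕜 x a (min n k)) :
    ∀ z : (Submodule.span 𝕜 (Set.range x)).topologicalClosure,
      Filter.Tendsto (fun n => R n z) Filter.atTop (nhds (z : X)) := by
  intro z
  rw [Metric.tendsto_atTop]
  intro ε hε
  have hM2 : (0:ℝ) < M + 2 := by linarith
  have hz : (z : X) ∈ closure (Submodule.span 𝕜 (Set.range x) : Set X) := z.2
  rw [Metric.mem_closure_iff] at hz
  obtain ⟨y, hy, hdist⟩ := hz (ε / (M + 2)) (by positivity)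
  obtain ⟨a, k, hyk⟩ := span_rep 𝕜 x hy
  set zy : (Submodule.span 𝕜 (Set.range x)).topologicalClosure := ⟨y, subset_closure hy⟩
  refine ⟨k, fun n hn => ?_⟩
  have hRy : R n zy = y := by
    rw [hR n a k zy hyk, min_eq_right hn, ← hyk]
  have hnz : ‖(z : X) - y‖ < ε / (M + 2) := by
    rw [← dist_eq_norm]; exact hdist
  have hb : ‖R n (z - zy)‖ ≤ M * ‖z - zy‖ := Rbound 𝕜 x M hM hG R hR n (z - zy)
  have hzzy : ‖z - zy‖ = ‖(z : X) - y‖ := rfl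
  calc dist (R n z) (z : X) = ‖R n z - (z : X)‖ := dist_eq_norm _ _
    _ = ‖R n (z - zy) + (y - (z : X))‖ := by rw [map_sub, hRy]; congr 1; abel
    _ ≤ ‖R n (z - zy)‖ + ‖y - (z : X)‖ := norm_add_le _ _
    _ ≤ M * ‖(z : X) - y‖ + ‖(z : X) - y‖ := by
        rw [norm_sub_rev (y)]; rw [hzzy] at hb; linarith
    _ = (M + 1) * ‖(z : X) - y‖ := by ring
    _ < (M + 1) * (ε / (M + 2)) := by
        apply mul_lt_mul_of_pos_left hnz; linarith
    _ < ε := by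
        rw [mul_div_assoc', div_lt_iff₀ hM2]
        nlinarith
end
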